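/- Fix constants Ū_L, Ū_R ∈ ℝᵐ (nodal arrays via the flux balance), weights ω₁,...,ω_L > 0 summing to 1 with ω₁ = ω_L, reals λ, α > 0 with λα ≤ ω₁, vectors U₁,...,U_L ∈ ℝᵐ (nodal values in the cell), boundary neighbor values U_L^ext, U_R^ext ∈ ℝᵐ, and a flux map F : ℝᵐ → ℝᵐ. Define the Lax–Friedrichs two-point average H_α(A,B) := (A+B)/2 − (F(B) − F(A))/(2α). Then the identity ∑_{ν=1}^L ων Uν − (λ/2)[F(U_L) + F(U_R^ext) − α(U_R^ext − U_L) − F(U_L^ext) − F(U₁) + α(U₁ − U_L^ext)] = ∑_{ν=2}^{L−1} ων Uν + (ω₁ − λα)U₁ + (ω_L − λα)U_L + λα H_α(U_L^ext, U_R^ext) + λα H_α(U₁, U_L) holds, and under λα ≤ ω₁ all coefficients on the right are nonnegative and sum to 1 (so the left-hand side is a convex combination of the listed states whenever λα ≤ ω₁). -/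
import Mathlib

lemma sum_split_aux {n : ℕ} (f : Fin (n + 2) → ℝ) :
    ∑ ν, f ν = (∑ ν ∈ Finset.univ \ {0, Fin.last (n + 1)}, f ν) + f 0 + f (Fin.last (n + 1)) := by
  have hne : (0 : Fin (n + 2)) ≠ Fin.last (n + 1) := by
    simp [Fin.ext_iff]
  have hsub : ({0, Fin.last (n + 1)} : Finset (Fin (n + 2))) ⊆ Finset.univ :=
    Finset.subset_univ _
  rw [← Finset.sum_sdiff hsub, Finset.sum_pair hne]
  ring

theorem LF_convex_decomposition {n m : ℕ}
    (ω : Fin (n + 2) → ℝ) (hω : ∀ ν, 0 < ω ν) (hsum : ∑ ν, ω ν = 1)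
    (hωend : ω 0 = ω (Fin.last (n + 1)))
    (lam α : ℝ) (hlam : 0 < lam) (hα : 0 < α) (hCFL : lam * α ≤ ω 0)
    (U : Fin (n + 2) → Fin m → ℝ) (ULext URext : Fin m → ℝ)
    (F : (Fin m → ℝ) → Fin m → ℝ) :
    let H : (Fin m → ℝ) → (Fin m → ℝ) → Fin m → ℝ :=
      fun A B => (2 : ℝ)⁻¹ • (A + B) - (2 * α)⁻¹ • (F B - F A)
    let UL : Fin m → ℝ := U (Fin.last (n + 1))
    (∑ ν, ω ν • U ν
        - (lam / 2) • (F UL + F URext - α • (URext - UL)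
            - F ULext - F (U 0) + α • (U 0 - ULext))
      = (∑ ν ∈ Finset.univ \ {0, Fin.last (n + 1)}, ω ν • U ν)
        + (ω 0 - lam * α) • U 0 + (ω (Fin.last (n + 1)) - lam * α) • UL
        + (lam * α) • H ULext URext + (lam * α) • H (U 0) UL) ∧
    (0 ≤ ω 0 - lam * α) ∧ (0 ≤ ω (Fin.last (n + 1)) - lam * α) ∧
    ((∑ ν ∈ Finset.univ \ {0, Fin.last (n + 1)}, ω ν)
        + (ω 0 - lam * α) + (ω (Fin.last (n + 1)) - lam * α)
        + lam * α + lam * α = 1) := by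
  intro H UL
  have hαne : α ≠ 0 := ne_of_gt hα
  refine ⟨?_, by linarith, by rw [← hωend]; linarith, ?_⟩
  · funext x
    simp only [H, UL, Pi.sub_apply, Pi.add_apply, Pi.smul_apply, smul_eq_mul,
      Finset.sum_apply]
    have hsplit : ∑ ν, ω ν * U ν x
        = (∑ ν ∈ Finset.univ \ {0, Fin.last (n + 1)}, ω ν * U ν x)
          + ω 0 * U 0 x + ω (Fin.last (n + 1)) * U (Fin.last (n + 1)) x :=
      sum_split_aux _
    rw [hsplit]
    field_simp
    ring
  · have := sum_split_aux ω
    rw [this] at hsum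
    linarith
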